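/- Let h > 0 and let Z be a nonnegative random variable such that hZ is integer-valued and P(hZ = r) = (c + o(1)) (h/r)^κ as r → ∞, with c > 0, κ > 2. Let Λ_Z be mixed Poisson with intensity Z. Then P(Λ_Z = r) = (c h + o(1)) r^{-κ} as r → ∞. -/

import Mathlib

open MeasureTheory Filter

namespace MPaux

open Set

noncomputable def F (s h x : ℝ) : ℝ := x ^ s * Real.exp (-(x / h))
noncomputable def F' (s h x : ℝ) : ℝ :=
  (s * x ^ (s - 1) - x ^ s / h) * Real.exp (-(x / h))

lemma hasDerivAt_F {s h : ℝ} (hs : 1 ≤ s) (x : ℝ) :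
    HasDerivAt (F s h) (F' s h x) x := by
  have d1 : HasDerivAt (fun y : ℝ => y ^ s) (s * x ^ (s - 1)) x :=
    Real.hasDerivAt_rpow_const (Or.inr hs)
  have d0 : HasDerivAt (fun y : ℝ => -(y / h)) (-(1 / h)) x := by
    exact ((hasDerivAt_id x).div_const h).neg
  have d2 : HasDerivAt (fun y : ℝ => Real.exp (-(y / h)))
      (Real.exp (-(x / h)) * (-(1 / h))) x := d0.exp
  have := d1.mul d2
  refine this.congr_deriv ?_
  unfold F'
  field_simp
  ring

lemma contF {s : ℝ} (hs : 0 ≤ s) (h : ℝ) : Continuous (F s h) :=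
  (Real.continuous_rpow_const hs).mul
    (Real.continuous_exp.comp ((continuous_id.div_const h).neg))

lemma contF' {s : ℝ} (hs : 1 ≤ s) (h : ℝ) : Continuous (F' s h) := by
  apply Continuous.mul
  · exact (continuous_const.mul (Real.continuous_rpow_const (by linarith))).sub
      ((Real.continuous_rpow_const (by linarith)).div_const h)
  · exact Real.continuous_exp.comp ((continuous_id.div_const h).neg)

lemma F_nonneg {s h x : ℝ} (hx : 0 ≤ x) : 0 ≤ F s h x := by
  unfold F; positivity

lemma F'_nonneg {s h x : ℝ} (hs : 1 ≤ s) (hh : 0 < h) (hx : 0 ≤ x) (hx2 : x ≤ s * h) :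
    0 ≤ F' s h x := by
  unfold F'
  apply mul_nonneg _ (Real.exp_pos _).le
  rcases eq_or_lt_of_le hx with rfl | hx0
  · have : (0:ℝ) ^ s = 0 := Real.zero_rpow (by linarith)
    rw [this]
    simp
    positivity
  · rw [show s = s - 1 + 1 by ring, Real.rpow_add hx0, Real.rpow_one]
    rw [show s - 1 + 1 = s by ring]
    have hxh : x / h ≤ s := (div_le_iff₀ hh).mpr (by linarith [hx2])
    have h1 : x ^ (s-1) * x / h = x ^ (s-1) * (x / h) := by ring
    rw [h1]
    have := Real.rpow_nonneg hx0.le (s - 1)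
    nlinarith

lemma F'_nonpos {s h x : ℝ} (hs : 1 ≤ s) (hh : 0 < h) (hx2 : s * h ≤ x) :
    F' s h x ≤ 0 := by
  unfold F'
  have hx0 : 0 < x := lt_of_lt_of_le (by positivity) hx2
  apply mul_nonpos_of_nonpos_of_nonneg _ (Real.exp_pos _).le
  rw [show s = s - 1 + 1 by ring, Real.rpow_add hx0, Real.rpow_one,
    show s - 1 + 1 = s by ring]
  have hxh : s ≤ x / h := (le_div_iff₀ hh).mpr (by linarith)
  have h1 : x ^ (s-1) * x / h = x ^ (s-1) * (x / h) := by ring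
  rw [h1]
  have := Real.rpow_nonneg hx0.le (s - 1)
  nlinarith

lemma integrableF {s h : ℝ} (hs : 1 ≤ s) (hh : 0 < h) :
    IntegrableOn (F s h) (Ioi 0) := by
  have := integrableOn_rpow_mul_exp_neg_mul_rpow (p := 1) (s := s) (b := 1/h)
    (by linarith) one_pos (by positivity)
  refine this.congr_fun (fun x _ => ?_) measurableSet_Ioi
  unfold F
  simp only [Real.rpow_one]
  ring_nf

lemma integrableF' {s h : ℝ} (hs : 1 ≤ s) (hh : 0 < h) :
    IntegrableOn (F' s h) (Ioi 0) := by
  have i1 := integrableOn_rpow_mul_exp_neg_mul_rpow (p := 1) (s := s - 1) (b := 1/h)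
    (by linarith) one_pos (by positivity)
  have i2 := integrableOn_rpow_mul_exp_neg_mul_rpow (p := 1) (s := s) (b := 1/h)
    (by linarith) one_pos (by positivity)
  have hg : IntegrableOn
      (fun x : ℝ => s * (x ^ (s-1) * Real.exp (-(1/h) * x ^ (1:ℝ))) +
        (1/h) * (x ^ s * Real.exp (-(1/h) * x ^ (1:ℝ)))) (Ioi 0) :=
    (i1.const_mul s).add (i2.const_mul (1/h))
  refine Integrable.mono' hg ((contF' hs h).aestronglyMeasurable.restrict) ?_
  rw [ae_restrict_iff' measurableSet_Ioi]
  refine Filter.Eventually.of_forall (fun x hx => ?_)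
  have hx0 : (0:ℝ) < x := hx
  have hexp : Real.exp (-(1/h) * x ^ (1:ℝ)) = Real.exp (-(x/h)) := by
    rw [Real.rpow_one]; ring_nf
  rw [hexp]
  unfold F'
  rw [Real.norm_eq_abs, abs_mul, abs_of_pos (Real.exp_pos _)]
  have h1 : |s * x ^ (s-1) - x ^ s / h| ≤ s * x ^ (s-1) + (1/h) * x ^ s := by
    have e1 : (0:ℝ) ≤ s * x ^ (s-1) := by positivity
    have e2 : (0:ℝ) ≤ x ^ s / h := by positivity
    have e3 : x ^ s / h = (1/h) * x ^ s := by ring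
    rw [abs_sub_comm, abs_sub_le_iff]
    constructor <;> linarith
  calc |s * x ^ (s-1) - x ^ s / h| * Real.exp (-(x/h))
      ≤ (s * x ^ (s-1) + (1/h) * x ^ s) * Real.exp (-(x/h)) := by
        exact mul_le_mul_of_nonneg_right h1 (Real.exp_pos _).le
    _ = s * (x ^ (s-1) * Real.exp (-(x/h))) + (1/h) * (x ^ s * Real.exp (-(x/h))) := by ring

lemma interval_bound {s h : ℝ} (hs : 1 ≤ s) (hh : 0 < h) (k : ℕ) :
    |F s h ((k:ℝ) + 1) - ∫ x in Ioc (k:ℝ) ((k:ℝ)+1), F s h x| ≤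
      ∫ x in Ioc (k:ℝ) ((k:ℝ)+1), |F' s h x| := by
  set a : ℝ := (k:ℝ) with ha
  set b : ℝ := (k:ℝ) + 1 with hb
  have hab : a ≤ b := by simp [ha, hb]
  have hFi : IntervalIntegrable (F s h) volume a b :=
    (contF (by linarith) h).intervalIntegrable a b
  have hF'i : IntervalIntegrable (F' s h) volume a b :=
    (contF' hs h).intervalIntegrable a b
  have hF'absi : IntervalIntegrable (fun x => |F' s h x|) volume a b :=
    (contF' hs h).abs.intervalIntegrable a b
  set V : ℝ := ∫ x in Ioc a b, |F' s h x| with hV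
  have hVii : V = ∫ x in a..b, |F' s h x| := (intervalIntegral.integral_of_le hab).symm
  have hbound : ∀ t ∈ Set.uIoc a b, ‖F s h b - F s h t‖ ≤ V := by
    intro t ht
    rw [Set.uIoc_of_le hab] at ht
    have hta : a ≤ t := ht.1.le
    have htb : t ≤ b := ht.2
    have hftc : ∫ u in t..b, F' s h u = F s h b - F s h t :=
      intervalIntegral.integral_eq_sub_of_hasDerivAt
        (fun u _ => hasDerivAt_F hs u) ((contF' hs h).intervalIntegrable t b)
    rw [← hftc]
    calc ‖∫ u in t..b, F' s h u‖ ≤ ∫ u in t..b, ‖F' s h u‖ :=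
          intervalIntegral.norm_integral_le_integral_norm htb
      _ ≤ ∫ u in a..b, |F' s h u| := by
          simp only [Real.norm_eq_abs]
          refine intervalIntegral.integral_mono_interval hta htb le_rfl ?_ hF'absi
          exact Filter.Eventually.of_forall fun x => abs_nonneg _
      _ = V := hVii.symm
  have h1 : (∫ t in a..b, (F s h b - F s h t)) = F s h b - ∫ t in a..b, F s h t := by
    rw [intervalIntegral.integral_sub (intervalIntegrable_const) hFi,
      intervalIntegral.integral_const]
    have : b - a = 1 := by simp [ha, hb]
    rw [this, one_smul]
  have h2 : ‖∫ t in a..b, (F s h b - F s h t)‖ ≤ V * |b - a| :=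
    intervalIntegral.norm_integral_le_of_norm_le_const hbound
  rw [h1] at h2
  have : |b - a| = 1 := by simp [ha, hb]
  rw [this, mul_one, Real.norm_eq_abs] at h2
  rwa [← intervalIntegral.integral_of_le hab]

lemma totalvar_bound {s h : ℝ} (hs : 1 ≤ s) (hh : 0 < h) :
    ∫ x in Ioi (0:ℝ), |F' s h x| = 2 * F s h (s * h) := by
  have hsh : (0:ℝ) < s * h := by positivity
  have hsplit : Ioc (0:ℝ) (s*h) ∪ Ioi (s*h) = Ioi (0:ℝ) := Ioc_union_Ioi_eq_Ioi hsh.le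
  have hint : IntegrableOn (fun x => |F' s h x|) (Ioi 0) := (integrableF' hs hh).abs
  have hi1 : IntegrableOn (fun x => |F' s h x|) (Ioc 0 (s*h)) :=
    hint.mono_set (fun x hx => hx.1)
  have hi2 : IntegrableOn (fun x => |F' s h x|) (Ioi (s*h)) :=
    hint.mono_set (fun x hx => lt_trans hsh hx)
  have e0 : (∫ x in Ioi (0:ℝ), |F' s h x|) =
      (∫ x in Ioc (0:ℝ) (s*h), |F' s h x|) + ∫ x in Ioi (s*h), |F' s h x| := by
    rw [← hsplit, setIntegral_union (Ioc_disjoint_Ioi le_rfl) measurableSet_Ioi hi1 hi2]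
  have e1 : (∫ x in Ioc (0:ℝ) (s*h), |F' s h x|) = F s h (s*h) := by
    have : (∫ x in Ioc (0:ℝ) (s*h), |F' s h x|) = ∫ x in Ioc (0:ℝ) (s*h), F' s h x := by
      refine setIntegral_congr_fun measurableSet_Ioc (fun x hx => ?_)
      exact abs_of_nonneg (F'_nonneg hs hh hx.1.le hx.2)
    rw [this, ← intervalIntegral.integral_of_le hsh.le,
      intervalIntegral.integral_eq_sub_of_hasDerivAt (fun u _ => hasDerivAt_F hs u)
        ((contF' hs h).intervalIntegrable 0 (s*h))]
    have hF0 : F s h 0 = 0 := by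
      unfold F
      rw [Real.zero_rpow (by linarith : s ≠ 0)]
      ring
    rw [hF0, sub_zero]
  have e2 : (∫ x in Ioi (s*h), |F' s h x|) = F s h (s*h) := by
    have habs : (∫ x in Ioi (s*h), |F' s h x|) = ∫ x in Ioi (s*h), -(F' s h x) := by
      refine setIntegral_congr_fun measurableSet_Ioi (fun x hx => ?_)
      exact abs_of_nonpos (F'_nonpos hs hh (le_of_lt hx))
    have htend : Tendsto (F s h) atTop (nhds 0) := by
      have := tendsto_rpow_mul_exp_neg_mul_atTop_nhds_zero s (1/h) (by positivity)
      refine this.congr fun x => ?_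
      unfold F
      congr 2
      ring
    have hFi' : IntegrableOn (F' s h) (Ioi (s*h)) :=
      (integrableF' hs hh).mono_set (fun x hx => lt_trans hsh hx)
    have := integral_Ioi_of_hasDerivAt_of_tendsto' (f := F s h) (f' := F' s h)
      (a := s*h) (m := 0) (fun x _ => hasDerivAt_F hs x) hFi' htend
    rw [habs, integral_neg, this]
    ring
  rw [e0, e1, e2]
  ring

lemma iUnion_Ioc_nat : (⋃ k : ℕ, Ioc (k : ℝ) (k + 1)) = Ioi (0 : ℝ) := by
  ext x
  simp only [mem_iUnion, mem_Ioc, mem_Ioi]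
  constructor
  · rintro ⟨k, hk1, -⟩
    exact lt_of_le_of_lt (by positivity) hk1
  · intro hx
    have h2 : 1 ≤ ⌈x⌉₊ := Nat.one_le_ceil_iff.mpr hx
    refine ⟨⌈x⌉₊ - 1, ?_, ?_⟩
    · have h1 : (⌈x⌉₊ : ℝ) < x + 1 := Nat.ceil_lt_add_one hx.le
      rw [Nat.cast_sub h2]; push_cast; linarith
    · rw [Nat.cast_sub h2]; push_cast
      have := Nat.le_ceil x
      linarith

lemma Ioc_nat_disjoint : Pairwise (Function.onFun Disjoint (fun k : ℕ => Ioc (k:ℝ) (k+1))) := by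
  intro i j hij
  have key : ∀ m n : ℕ, m < n → Disjoint (Ioc (m:ℝ) (m+1)) (Ioc (n:ℝ) (n+1)) := by
    intro m n hmn
    refine Set.Ioc_disjoint_Ioc.mpr ?_
    have h1 : (m:ℝ) + 1 ≤ (n:ℝ) := by exact_mod_cast Nat.succ_le_of_lt hmn
    calc min ((m:ℝ)+1) ((n:ℝ)+1) ≤ (m:ℝ) + 1 := min_le_left _ _
      _ ≤ (n:ℝ) := h1
      _ ≤ max (m:ℝ) (n:ℝ) := le_max_right _ _
  rcases hij.lt_or_gt with hl | hl
  · exact key i j hl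
  · exact (key j i hl).symm

lemma sum_vs_integral {s h : ℝ} (hs : 1 ≤ s) (hh : 0 < h) :
    Summable (fun k : ℕ => F s h ((k:ℝ)+1)) ∧
    |(∑' k : ℕ, F s h ((k:ℝ)+1)) - Real.Gamma (s+1) * h ^ (s+1)| ≤
      2 * ((s*h)^s * Real.exp (-s)) := by
  have hmeasIoc : ∀ k : ℕ, MeasurableSet (Ioc (k:ℝ) ((k:ℝ)+1)) := fun k => measurableSet_Ioc
  have hsumF : HasSum (fun k : ℕ => ∫ x in Ioc (k:ℝ) ((k:ℝ)+1), F s h x)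
      (∫ x in Ioi (0:ℝ), F s h x) := by
    have := hasSum_integral_iUnion hmeasIoc Ioc_nat_disjoint
      (by rw [iUnion_Ioc_nat]; exact integrableF hs hh)
    rwa [iUnion_Ioc_nat] at this
  have hsumV : HasSum (fun k : ℕ => ∫ x in Ioc (k:ℝ) ((k:ℝ)+1), |F' s h x|)
      (∫ x in Ioi (0:ℝ), |F' s h x|) := by
    have := hasSum_integral_iUnion hmeasIoc Ioc_nat_disjoint
      (by rw [iUnion_Ioc_nat]; exact (integrableF' hs hh).abs)
    rwa [iUnion_Ioc_nat] at this
  -- summability of the main series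
  have hkey := fun k : ℕ => interval_bound hs hh k
  have hSummable : Summable (fun k : ℕ => F s h ((k:ℝ)+1)) := by
    refine Summable.of_nonneg_of_le (fun k => F_nonneg (by positivity)) (fun k => ?_)
      (hsumF.summable.add hsumV.summable)
    have := (abs_le.mp (hkey k)).2
    linarith
  refine ⟨hSummable, ?_⟩
  -- the integral value
  have Ival : (∫ x in Ioi (0:ℝ), F s h x) = Real.Gamma (s+1) * h ^ (s+1) := by
    have := Real.integral_rpow_mul_exp_neg_mul_Ioi (a := s+1) (r := 1/h)
      (by linarith) (by positivity)
    rw [show ((1:ℝ)/(1/h)) = h by field_simp] at this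
    rw [mul_comm, ← this]
    refine setIntegral_congr_fun measurableSet_Ioi (fun x hx => ?_)
    unfold F
    rw [show s + 1 - 1 = s by ring]
    congr 2
    field_simp
  -- difference term by term
  have hdsum : Summable (fun k : ℕ => F s h ((k:ℝ)+1) - ∫ x in Ioc (k:ℝ) ((k:ℝ)+1), F s h x) :=
    hSummable.sub hsumF.summable
  have e1 : (∑' k : ℕ, F s h ((k:ℝ)+1)) - Real.Gamma (s+1) * h ^ (s+1) =
      ∑' k : ℕ, (F s h ((k:ℝ)+1) - ∫ x in Ioc (k:ℝ) ((k:ℝ)+1), F s h x) := by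
    rw [Summable.tsum_sub hSummable hsumF.summable, hsumF.tsum_eq, Ival]
  rw [e1]
  have habs : |∑' k : ℕ, (F s h ((k:ℝ)+1) - ∫ x in Ioc (k:ℝ) ((k:ℝ)+1), F s h x)| ≤
      ∑' k : ℕ, |F s h ((k:ℝ)+1) - ∫ x in Ioc (k:ℝ) ((k:ℝ)+1), F s h x| := by
    have hsabs : Summable (fun k : ℕ =>
        |F s h ((k:ℝ)+1) - ∫ x in Ioc (k:ℝ) ((k:ℝ)+1), F s h x|) :=
      Summable.of_nonneg_of_le (fun k => abs_nonneg _) hkey hsumV.summable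
    simpa [Real.norm_eq_abs] using norm_tsum_le_tsum_norm (f := fun k : ℕ =>
      (F s h ((k:ℝ)+1) - ∫ x in Ioc (k:ℝ) ((k:ℝ)+1), F s h x)) (by simpa using hsabs)
  refine habs.trans ?_
  have hsabs : Summable (fun k : ℕ =>
      |F s h ((k:ℝ)+1) - ∫ x in Ioc (k:ℝ) ((k:ℝ)+1), F s h x|) :=
    Summable.of_nonneg_of_le (fun k => abs_nonneg _) hkey hsumV.summable
  calc (∑' k : ℕ, |F s h ((k:ℝ)+1) - ∫ x in Ioc (k:ℝ) ((k:ℝ)+1), F s h x|)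
      ≤ ∑' k : ℕ, ∫ x in Ioc (k:ℝ) ((k:ℝ)+1), |F' s h x| :=
        Summable.tsum_le_tsum hkey hsabs hsumV.summable
    _ = ∫ x in Ioi (0:ℝ), |F' s h x| := hsumV.tsum_eq
    _ = 2 * F s h (s * h) := totalvar_bound hs hh
    _ = 2 * ((s*h)^s * Real.exp (-s)) := by
        unfold F
        rw [mul_div_assoc, div_self hh.ne', mul_one]

section
open Real

lemma gamma_ratio_tendsto {κ : ℝ} (hκ : 0 < κ) :
    Tendsto (fun r : ℕ => (r : ℝ) ^ κ * Real.Gamma ((r : ℝ) - κ + 1) / Real.Gamma ((r : ℝ) + 1))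
      atTop (nhds 1) := by
  have hcast : Tendsto (fun r : ℕ => (r : ℝ)) atTop atTop := tendsto_natCast_atTop_atTop
  -- lower and upper bounding sequences
  have hlo : Tendsto (fun r : ℕ => ((r : ℝ) / ((r : ℝ) + 1)) ^ κ) atTop (nhds 1) := by
    have hb : Tendsto (fun r : ℕ => (r : ℝ) / ((r : ℝ) + 1)) atTop (nhds 1) := by
      have h1 : Tendsto (fun r : ℕ => ((r : ℝ) + 1)⁻¹) atTop (nhds 0) :=
        tendsto_inv_atTop_zero.comp (tendsto_atTop_add_const_right _ 1 hcast)
      have := (tendsto_const_nhds (x := (1:ℝ)) (f := atTop)).sub h1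
      rw [sub_zero] at this
      refine this.congr fun r => ?_
      have : (r : ℝ) + 1 ≠ 0 := by positivity
      field_simp
      ring
    have := hb.rpow_const (Or.inr hκ.le)
    simpa using this
  have hhi : Tendsto (fun r : ℕ => ((r : ℝ) / ((r : ℝ) - κ)) ^ κ) atTop (nhds 1) := by
    have hb : Tendsto (fun r : ℕ => (r : ℝ) / ((r : ℝ) - κ)) atTop (nhds 1) := by
      have h1 : Tendsto (fun r : ℕ => ((r : ℝ) - κ)⁻¹) atTop (nhds 0) :=
        tendsto_inv_atTop_zero.comp (tendsto_atTop_add_const_right _ (-κ) hcast)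
      have := ((tendsto_const_nhds (x := (1:ℝ)) (f := atTop)).add (h1.const_mul κ))
      rw [mul_zero, add_zero] at this
      refine (this.congr' ?_)
      filter_upwards [hcast.eventually_gt_atTop κ] with r hr
      have : (r : ℝ) - κ ≠ 0 := by linarith
      field_simp
      ring
    have := hb.rpow_const (Or.inr hκ.le)
    simpa using this
  refine tendsto_of_tendsto_of_tendsto_of_le_of_le' hlo hhi ?_ ?_
  all_goals {
    filter_upwards [hcast.eventually_gt_atTop (κ + 1)] with r hr
    have hb : (0 : ℝ) < r := by linarith
    set b := (r : ℝ)
    have hy : (0 : ℝ) < b - κ := by simp only [b]; linarith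
    have hconv := Real.convexOn_log_Gamma
    -- slope comparisons for log Gamma at points (b-κ, b-κ+1, b+1) and (b-κ+1, b+1, b+2)
    have hG1 : (0:ℝ) < Real.Gamma (b - κ) := Real.Gamma_pos_of_pos hy
    have hG2 : (0:ℝ) < Real.Gamma (b - κ + 1) := Real.Gamma_pos_of_pos (by linarith)
    have hG3 : (0:ℝ) < Real.Gamma (b + 1) := Real.Gamma_pos_of_pos (by linarith)
    have hG4 : (0:ℝ) < Real.Gamma (b + 2) := Real.Gamma_pos_of_pos (by linarith)
    have e1 : Real.Gamma (b - κ + 1) = (b - κ) * Real.Gamma (b - κ) :=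
      Real.Gamma_add_one hy.ne'
    have e2 : Real.Gamma (b + 2) = (b + 1) * Real.Gamma (b + 1) := by
      have := Real.Gamma_add_one (s := b + 1) (by linarith)
      rw [show b + 1 + 1 = b + 2 by ring] at this
      exact this
    -- slope_mono_adjacent : slope on (x,y) ≤ slope on (y,z)
    have s1 := hconv.slope_mono_adjacent (x := b - κ) (y := b - κ + 1) (z := b + 1)
      (mem_Ioi.mpr hy) (mem_Ioi.mpr (by linarith)) (by linarith) (by linarith)
    have s2 := hconv.slope_mono_adjacent (x := b - κ + 1) (y := b + 1) (z := b + 2)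
      (mem_Ioi.mpr (by linarith)) (mem_Ioi.mpr (by linarith)) (by linarith) (by linarith)
    simp only [Function.comp_apply] at s1 s2
    -- simplify unit-interval slopes
    rw [show b - κ + 1 - (b - κ) = 1 by ring, div_one, e1,
      Real.log_mul hy.ne' hG1.ne', add_sub_cancel_right,
      ← Real.log_mul hy.ne' hG1.ne', ← e1,
      show b + 1 - (b - κ + 1) = κ by ring] at s1
    rw [show b + 2 - (b + 1) = 1 by ring, div_one, e2,
      Real.log_mul (by linarith : b + 1 ≠ 0) hG3.ne', add_sub_cancel_right,
      show b + 1 - (b - κ + 1) = κ by ring] at s2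
    -- s1 : log (b - κ) ≤ (log Γ(b+1) - log Γ(b-κ+1)) / κ
    -- s2 : (log Γ(b+1) - log Γ(b-κ+1)) / κ ≤ log (b + 1)
    have key1 : (b - κ) ^ κ ≤ Real.Gamma (b + 1) / Real.Gamma (b - κ + 1) := by
      have h := mul_le_mul_of_nonneg_left s1 hκ.le
      rw [mul_div_cancel₀ _ hκ.ne', mul_comm κ (Real.log (b - κ))] at h
      have h' := Real.exp_le_exp.mpr h
      rwa [Real.exp_sub, Real.exp_log hG3, Real.exp_log hG2,
        ← Real.rpow_def_of_pos hy] at h'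
    have key2 : Real.Gamma (b + 1) / Real.Gamma (b - κ + 1) ≤ (b + 1) ^ κ := by
      have h := mul_le_mul_of_nonneg_left s2 hκ.le
      rw [mul_div_cancel₀ _ hκ.ne', mul_comm κ (Real.log (b + 1))] at h
      have h' := Real.exp_le_exp.mpr h
      rwa [Real.exp_sub, Real.exp_log hG3, Real.exp_log hG2,
        ← Real.rpow_def_of_pos (by linarith : (0:ℝ) < b + 1)] at h'
    have hbk : (0:ℝ) < (b - κ) ^ κ := Real.rpow_pos_of_pos hy κ
    have hbk1 : (0:ℝ) < (b + 1) ^ κ := Real.rpow_pos_of_pos (by linarith) κ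
    have hbκ : (0:ℝ) ≤ b ^ κ := Real.rpow_nonneg hb.le κ
    first
    | { -- lower bound goal
        rw [Real.div_rpow hb.le (by linarith : (0:ℝ) ≤ b + 1),
          div_le_div_iff₀ hbk1 hG3]
        have h2 : Real.Gamma (b + 1) ≤ (b + 1) ^ κ * Real.Gamma (b - κ + 1) :=
          (div_le_iff₀ hG2).mp key2
        nlinarith [mul_le_mul_of_nonneg_left h2 hbκ] }
    | { -- upper bound goal
        rw [Real.div_rpow hb.le hy.le, div_le_div_iff₀ hG3 hbk]
        have h1 : (b - κ) ^ κ * Real.Gamma (b - κ + 1) ≤ Real.Gamma (b + 1) :=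
          (le_div_iff₀ hG2).mp key1
        nlinarith [mul_le_mul_of_nonneg_left h1 hbκ] }
  }


lemma err_tendsto {κ : ℝ} (hκ : 0 < κ) :
    Tendsto (fun r : ℕ => 2 * ((r : ℝ) ^ κ *
      (((r : ℝ) - κ) ^ ((r : ℝ) - κ) * Real.exp (-((r : ℝ) - κ))) / (Nat.factorial r)))
      atTop (nhds 0) := by
  have hcast : Tendsto (fun r : ℕ => (r : ℝ)) atTop atTop := tendsto_natCast_atTop_atTop
  have hU : Tendsto (fun r : ℕ => 2 * Real.exp κ / Real.sqrt (2 * (r : ℝ))) atTop (nhds 0) := by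
    have h0 : Tendsto (fun r : ℕ => (2 * (r:ℝ))⁻¹) atTop (nhds 0) :=
      tendsto_inv_atTop_zero.comp ((tendsto_const_mul_atTop_of_pos two_pos).mpr hcast)
    have h1 : Tendsto (fun r : ℕ => (Real.sqrt (2 * (r:ℝ)))⁻¹) atTop (nhds 0) := by
      have hcomp := (Real.continuous_sqrt.tendsto 0).comp h0
      rw [Real.sqrt_zero] at hcomp
      exact hcomp.congr fun r => Real.sqrt_inv (2 * (r:ℝ))
    have h2 : Tendsto (fun r : ℕ => (2 * Real.exp κ) * (Real.sqrt (2 * (r:ℝ)))⁻¹)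
        atTop (nhds 0) := by
      simpa using h1.const_mul (2 * Real.exp κ)
    exact h2.congr fun r => (div_eq_mul_inv _ _).symm
  have hstir : ∀ᶠ r : ℕ in atTop, 1 ≤ Stirling.stirlingSeq r := by
    have hπ : (1:ℝ) < Real.sqrt π := by
      rw [show (1:ℝ) = Real.sqrt 1 by simp]
      exact Real.sqrt_lt_sqrt zero_le_one (by linarith [Real.pi_gt_three])
    filter_upwards [Stirling.tendsto_stirlingSeq_sqrt_pi.eventually_const_le hπ] with n hn
    linarith
  refine squeeze_zero' ?_ ?_ hU
  · filter_upwards [hcast.eventually_gt_atTop κ] with r hr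
    have hy : (0:ℝ) ≤ (r:ℝ) - κ := by linarith
    have h1 : (0:ℝ) ≤ (r:ℝ) := by linarith
    positivity
  · filter_upwards [hcast.eventually_gt_atTop κ, hstir] with r hr hst
    set b := (r : ℝ) with hbdef
    have hb : (0:ℝ) < b := hκ.trans hr
    set s := b - κ with hsdef
    have hs : (0:ℝ) < s := by simp only [hsdef]; linarith
    have hsqrt : (0:ℝ) < Real.sqrt (2 * b) := Real.sqrt_pos.mpr (by linarith)
    have hD : (0:ℝ) < Real.sqrt (2 * b) * (b / Real.exp 1) ^ r := by positivity
    have hfac : Real.sqrt (2 * b) * (b / Real.exp 1) ^ r ≤ (Nat.factorial r : ℝ) := by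
      rw [Stirling.stirlingSeq] at hst
      exact (one_le_div hD).mp hst
    have e3 : ((b / Real.exp 1) ^ r : ℝ) = b ^ b / Real.exp b := by
      rw [← Real.rpow_natCast (b / Real.exp 1) r, ← hbdef,
        Real.div_rpow hb.le (Real.exp_pos 1).le, Real.exp_one_rpow]
    have numb : b ^ κ * (s ^ s * Real.exp (-s)) ≤ Real.exp κ * ((b / Real.exp 1) ^ r) := by
      rw [e3]
      have hss : s ^ s ≤ b ^ s := Real.rpow_le_rpow hs.le (by simp [hsdef]; linarith) hs.le
      have hbb : b ^ κ * b ^ s = b ^ b := by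
        rw [← Real.rpow_add hb]; congr 1; simp [hsdef]
      calc b ^ κ * (s ^ s * Real.exp (-s)) ≤ b ^ κ * (b ^ s * Real.exp (-s)) := by
            exact mul_le_mul_of_nonneg_left
              (mul_le_mul_of_nonneg_right hss (Real.exp_pos _).le)
              (Real.rpow_nonneg hb.le κ)
        _ = b ^ b * Real.exp (-s) := by rw [← hbb]; ring
        _ = Real.exp κ * (b ^ b / Real.exp b) := by
            rw [show -s = κ - b by rw [hsdef]; ring, Real.exp_sub]
            ring
    have key : b ^ κ * (s ^ s * Real.exp (-s)) / (Nat.factorial r : ℝ) ≤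
        Real.exp κ / Real.sqrt (2 * b) := by
      have hnum : (0:ℝ) ≤ b ^ κ * (s ^ s * Real.exp (-s)) := by positivity
      calc b ^ κ * (s ^ s * Real.exp (-s)) / (Nat.factorial r : ℝ)
          ≤ b ^ κ * (s ^ s * Real.exp (-s)) / (Real.sqrt (2 * b) * (b / Real.exp 1) ^ r) := by
            apply div_le_div_of_nonneg_left hnum hD hfac
        _ ≤ Real.exp κ / Real.sqrt (2 * b) := by
            rw [div_le_div_iff₀ hD hsqrt]
            have := mul_le_mul_of_nonneg_right numb (Real.sqrt_nonneg (2 * b))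
            nlinarith [Real.sqrt_nonneg (2 * b)]
    calc 2 * (b ^ κ * (s ^ s * Real.exp (-s)) / (Nat.factorial r : ℝ))
        ≤ 2 * (Real.exp κ / Real.sqrt (2 * b)) := by linarith
      _ = 2 * Real.exp κ / Real.sqrt (2 * b) := by ring

lemma fixed_tendsto (κ : ℝ) (x : ℝ) :
    Tendsto (fun r : ℕ => (r : ℝ) ^ κ * x ^ r / (Nat.factorial r)) atTop (nhds 0) := by
  have h1 : Tendsto (fun r : ℕ => (r : ℝ) ^ κ / 2 ^ r) atTop (nhds 0) := by
    have h0 := tendsto_rpow_mul_exp_neg_mul_atTop_nhds_zero κ (Real.log 2)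
      (Real.log_pos one_lt_two)
    have := h0.comp (tendsto_natCast_atTop_atTop (R := ℝ))
    refine this.congr fun r => ?_
    simp only [Function.comp_apply]
    rw [div_eq_mul_inv]
    congr 1
    rw [neg_mul, Real.exp_neg, mul_comm (Real.log 2), Real.exp_nat_mul, Real.exp_log two_pos]
  have h2 : Tendsto (fun r : ℕ => (2 * x) ^ r / (Nat.factorial r : ℝ)) atTop (nhds 0) :=
    FloorSemiring.tendsto_pow_div_factorial_atTop (2 * x)
  have h3 := h1.mul h2
  rw [mul_zero] at h3
  refine h3.congr fun r => ?_
  have hne : (2 : ℝ) ^ r ≠ 0 := by positivity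
  have hfac : (Nat.factorial r : ℝ) ≠ 0 := by positivity
  rw [mul_pow]
  field_simp

end

lemma poisson_le_one {x : ℝ} (hx : 0 ≤ x) (r : ℕ) :
    Real.exp (-x) * x ^ r / (Nat.factorial r) ≤ 1 := by
  have h1 : x ^ r / (Nat.factorial r : ℝ) ≤ Real.exp x := by
    refine le_trans ?_ (Real.sum_le_exp_of_nonneg hx (r + 1))
    refine Finset.single_le_sum (f := fun i => x ^ i / (Nat.factorial i : ℝ)) ?_ ?_
    · intro i _; positivity
    · exact Finset.self_mem_range_succ r
  calc Real.exp (-x) * x ^ r / (Nat.factorial r)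
      = Real.exp (-x) * (x ^ r / (Nat.factorial r)) := by ring
    _ ≤ Real.exp (-x) * Real.exp x :=
        mul_le_mul_of_nonneg_left h1 (Real.exp_pos _).le
    _ = 1 := by rw [← Real.exp_add]; simp

end MPaux

open MPaux Set

/-- If `hZ` is integer-valued and `P(hZ = r) = (c + o(1))(h/r)^κ`, `κ > 2`, then the
mixed Poisson `Λ_Z` with intensity `Z` satisfies `P(Λ_Z = r) = (ch + o(1)) r^{-κ}`. -/
theorem mixedPoisson_local_scaled {Ω : Type*} [MeasurableSpace Ω] (μ : Measure Ω)
    [IsProbabilityMeasure μ] (Z : Ω → ℝ) (hmeas : Measurable Z) (hZpos : ∀ ω, 0 ≤ Z ω)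
    (h c κ : ℝ) (hh : 0 < h) (hc : 0 < c) (hκ : 2 < κ)
    (hint : ∀ ω, ∃ k : ℕ, h * Z ω = k)
    (hloc : Tendsto (fun r : ℕ => (μ {ω | h * Z ω = r}).toReal / (h / r) ^ κ)
      atTop (nhds c)) :
    Tendsto (fun r : ℕ => (r : ℝ) ^ κ *
        ∫ ω, Real.exp (-Z ω) * Z ω ^ r / (Nat.factorial r) ∂μ)
      atTop (nhds (c * h)) := by
  have hκ0 : (0:ℝ) < κ := by linarith
  set A : ℕ → Set Ω := fun k => {ω | h * Z ω = (k : ℝ)} with hAdef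
  set p : ℕ → ℝ := fun k => (μ (A k)).toReal with hpdef
  set q : ℕ → ℕ → ℝ :=
    fun r k => Real.exp (-((k:ℝ)/h)) * ((k:ℝ)/h) ^ r / (Nat.factorial r) with hqdef
  set w : ℕ → ℕ → ℝ := fun r k => (r:ℝ)^κ * ((h/(k:ℝ))^κ * q r k) with hwdef
  set aa : ℕ → ℝ := fun k => p k / (h/(k:ℝ))^κ with haadef
  -- basic facts
  have hAmeas : ∀ k : ℕ, MeasurableSet (A k) := by
    intro k
    have : A k = (fun ω => h * Z ω) ⁻¹' {(k:ℝ)} := by ext ω; simp [hAdef]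
    rw [this]
    exact (measurable_const.mul hmeas) (measurableSet_singleton _)
  have hAdisj : Pairwise (Function.onFun Disjoint A) := by
    intro i j hij
    simp only [Function.onFun, Set.disjoint_left]
    intro ω h1 h2
    apply hij
    have h1' : h * Z ω = (i:ℝ) := h1
    have h2' : h * Z ω = (j:ℝ) := h2
    have : (i:ℝ) = (j:ℝ) := by rw [← h1', ← h2']
    exact_mod_cast this
  have hAunion : (⋃ k, A k) = univ := by
    rw [eq_univ_iff_forall]
    intro ω
    obtain ⟨k, hk⟩ := hint ω
    exact mem_iUnion.mpr ⟨k, hk⟩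
  have hq_nonneg : ∀ r k, 0 ≤ q r k := by
    intro r k
    have : (0:ℝ) ≤ (k:ℝ)/h := by positivity
    simp only [hqdef]
    positivity
  have hq_le_one : ∀ r k, q r k ≤ 1 := by
    intro r k
    simp only [hqdef]
    exact poisson_le_one (by positivity) r
  have hw_nonneg : ∀ r k, 0 ≤ w r k := by
    intro r k
    have h0 := hq_nonneg r k
    have h1 : (0:ℝ) ≤ (h/(k:ℝ))^κ := Real.rpow_nonneg (by positivity) κ
    simp only [hwdef]
    have h2 : (0:ℝ) ≤ ((r:ℕ):ℝ)^κ := Real.rpow_nonneg (by positivity) κ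
    positivity
  have hb_pos : ∀ k : ℕ, (0:ℝ) < (h/((k:ℝ)+1))^κ := by
    intro k
    exact Real.rpow_pos_of_pos (by positivity) κ
  have hbsum : Summable (fun k : ℕ => (h/((k:ℝ)+1))^κ) := by
    have h0 : Summable (fun n : ℕ => 1 / (n:ℝ)^κ) :=
      Real.summable_one_div_nat_rpow.mpr (by linarith)
    have h1 : Summable (fun k : ℕ => 1 / (((k:ℝ)+1))^κ) := by
      have := (summable_nat_add_iff (f := fun n : ℕ => 1 / (n:ℝ)^κ) 1).mpr h0
      refine this.congr fun k => ?_
      push_cast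
      ring_nf
    refine (h1.mul_left (h^κ)).congr fun k => ?_
    rw [Real.div_rpow hh.le (by positivity)]
    ring
  have hwsum : ∀ r, Summable (fun k => w r (k+1)) := by
    intro r
    refine Summable.of_nonneg_of_le (fun k => hw_nonneg r (k+1)) (fun k => ?_)
      (hbsum.mul_left ((r:ℝ)^κ))
    have h1 := hq_le_one r (k+1)
    have h2 : ((k+1:ℕ):ℝ) = (k:ℝ)+1 := by push_cast; ring
    simp only [hwdef, h2]
    have h3 : (0:ℝ) ≤ (h/((k:ℝ)+1))^κ := (hb_pos k).le
    have h4 : (0:ℝ) ≤ ((r:ℕ):ℝ)^κ := Real.rpow_nonneg (by positivity) κ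
    calc ((r:ℕ):ℝ)^κ * ((h/((k:ℝ)+1))^κ * q r (k+1))
        ≤ ((r:ℕ):ℝ)^κ * ((h/((k:ℝ)+1))^κ * 1) := by
          apply mul_le_mul_of_nonneg_left _ h4
          exact mul_le_mul_of_nonneg_left h1 h3
      _ = ((r:ℕ):ℝ)^κ * (h/((k:ℝ)+1))^κ := by ring
  have hpsum : Summable p := by
    have h1 : (∑' k, μ (A k)) ≠ ⊤ := by
      rw [← measure_iUnion hAdisj hAmeas, hAunion]
      exact measure_ne_top μ univ
    exact ENNReal.summable_toReal h1
  have hp_nonneg : ∀ k, 0 ≤ p k := fun k => ENNReal.toReal_nonneg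
  have hpa : ∀ k : ℕ, p (k+1) = aa (k+1) * (h/((k+1:ℕ):ℝ))^κ := by
    intro k
    have h2 : ((k+1:ℕ):ℝ) = (k:ℝ)+1 := by push_cast; ring
    simp only [haadef, h2]
    rw [div_mul_cancel₀]
    exact (hb_pos k).ne'
  -- Step 1 : the integral as a sum
  have step1 : ∀ r : ℕ, (∫ ω, Real.exp (-Z ω) * Z ω ^ r / (Nat.factorial r) ∂μ)
      = ∑' k, p k * q r k := by
    intro r
    have hint_f : Integrable (fun ω => Real.exp (-Z ω) * Z ω ^ r / (Nat.factorial r)) μ := by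
      refine Integrable.mono' (integrable_const 1)
        (((hmeas.neg.exp.mul (hmeas.pow_const r)).div_const _).aestronglyMeasurable)
        (Filter.Eventually.of_forall fun ω => ?_)
      rw [Real.norm_eq_abs, abs_of_nonneg (div_nonneg (mul_nonneg (Real.exp_pos _).le
        (pow_nonneg (hZpos ω) r)) (by positivity))]
      exact poisson_le_one (hZpos ω) r
    have e1 := integral_iUnion hAmeas hAdisj
      (by rw [hAunion]; exact hint_f.integrableOn)
    rw [hAunion, Measure.restrict_univ] at e1
    rw [e1]
    refine tsum_congr fun k => ?_
    have hconst : ∀ ω ∈ A k, Real.exp (-Z ω) * Z ω ^ r / (Nat.factorial r) = q r k := by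
      intro ω hω
      have h1 : h * Z ω = (k:ℝ) := hω
      have hZω : Z ω = (k:ℝ)/h := by
        field_simp
        linarith
      rw [hZω]
    rw [setIntegral_congr_fun (hAmeas k) hconst, setIntegral_const, smul_eq_mul, mul_comm]
    exact mul_comm _ _
  -- summability of the error series
  have hEabs_sum : ∀ r : ℕ, Summable (fun k => |(aa (k+1) - c) * w r (k+1)|) := by
    intro r
    have hrn : (0:ℝ) ≤ ((r:ℕ):ℝ)^κ := Real.rpow_nonneg (by positivity) κ
    have hmaj : Summable (fun k => ((r:ℕ):ℝ)^κ * p (k+1) + c * w r (k+1)) :=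
      (((summable_nat_add_iff 1).mpr hpsum).mul_left _).add ((hwsum r).mul_left c)
    refine Summable.of_nonneg_of_le (fun k => abs_nonneg _) (fun k => ?_) hmaj
    rw [abs_mul, abs_of_nonneg (hw_nonneg r (k+1))]
    have haan : 0 ≤ aa (k+1) := by
      have h2 : ((k+1:ℕ):ℝ) = (k:ℝ)+1 := by push_cast; ring
      simp only [haadef, h2]
      exact div_nonneg (by simpa [hpdef] using (hp_nonneg (k+1))) (hb_pos k).le
    have h1 : |aa (k+1) - c| ≤ aa (k+1) + c :=
      abs_le.mpr ⟨by linarith, by linarith⟩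
    have h2 : aa (k+1) * w r (k+1) = ((r:ℕ):ℝ)^κ * (p (k+1) * q r (k+1)) := by
      rw [hpa k]
      simp only [hwdef]
      ring
    have h3 : p (k+1) * q r (k+1) ≤ p (k+1) := by
      nlinarith [hq_le_one r (k+1), hp_nonneg (k+1), hq_nonneg r (k+1)]
    calc |aa (k+1) - c| * w r (k+1) ≤ (aa (k+1) + c) * w r (k+1) :=
          mul_le_mul_of_nonneg_right h1 (hw_nonneg r (k+1))
      _ = aa (k+1) * w r (k+1) + c * w r (k+1) := by ring
      _ ≤ ((r:ℕ):ℝ)^κ * p (k+1) + c * w r (k+1) := by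
          rw [h2]
          have := mul_le_mul_of_nonneg_left h3 hrn
          linarith
  have hE_sum : ∀ r : ℕ, Summable (fun k => (aa (k+1) - c) * w r (k+1)) :=
    fun r => (hEabs_sum r).of_abs
  -- decomposition
  have hdecomp : ∀ r : ℕ, 1 ≤ r → (r : ℝ) ^ κ * (∑' k, p k * q r k) =
      c * (∑' k, w r (k+1)) + ∑' k, (aa (k+1) - c) * w r (k+1) := by
    intro r hr
    have husum : Summable (fun k => p k * q r k) :=
      Summable.of_nonneg_of_le (fun k => mul_nonneg (hp_nonneg k) (hq_nonneg r k))
        (fun k => by nlinarith [hq_le_one r k, hp_nonneg k, hq_nonneg r k]) hpsum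
    have hq0 : q r 0 = 0 := by
      simp only [hqdef]
      rw [Nat.cast_zero, zero_div, zero_pow (by omega : r ≠ 0)]
      ring
    rw [Summable.tsum_eq_zero_add husum, hq0, mul_zero, zero_add, ← tsum_mul_left]
    have hptw : ∀ k : ℕ, (r:ℝ)^κ * (p (k+1) * q r (k+1)) =
        c * w r (k+1) + (aa (k+1) - c) * w r (k+1) := by
      intro k
      have h2 : aa (k+1) * w r (k+1) = ((r:ℕ):ℝ)^κ * (p (k+1) * q r (k+1)) := by
        rw [hpa k]
        simp only [hwdef]
        ring
      rw [← h2]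
      ring
    rw [tsum_congr hptw, Summable.tsum_add ((hwsum r).mul_left c) (hE_sum r), tsum_mul_left]
  -- T tends to h
  have hT_tendsto : Tendsto (fun r : ℕ => ∑' k, w r (k+1)) atTop (nhds h) := by
    have hmain : Tendsto (fun r : ℕ =>
        h * ((r:ℝ)^κ * Real.Gamma ((r:ℝ) - κ + 1) / Real.Gamma ((r:ℝ)+1)))
        atTop (nhds (h * 1)) := (gamma_ratio_tendsto hκ0).const_mul h
    rw [mul_one] at hmain
    have hdiff : Tendsto (fun r : ℕ => (∑' k, w r (k+1)) -
        h * ((r:ℝ)^κ * Real.Gamma ((r:ℝ) - κ + 1) / Real.Gamma ((r:ℝ)+1)))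
        atTop (nhds 0) := by
      apply squeeze_zero_norm' ?_ (err_tendsto hκ0)
      filter_upwards [tendsto_natCast_atTop_atTop.eventually_ge_atTop (κ+1)] with r hrk
      have hs1 : 1 ≤ (r:ℝ) - κ := by linarith
      have hspos : (0:ℝ) < (r:ℝ) - κ := by linarith
      have hrpos : (0:ℝ) < (r:ℝ) := by linarith
      have hfne : (Nat.factorial r : ℝ) ≠ 0 := by positivity
      have hhs : (0:ℝ) < h ^ ((r:ℝ) - κ) := Real.rpow_pos_of_pos hh _
      have hC : (0:ℝ) < (r:ℝ)^κ / ((Nat.factorial r : ℝ) * h ^ ((r:ℝ) - κ)) := by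
        have h1 : (0:ℝ) < (r:ℝ)^κ := Real.rpow_pos_of_pos hrpos κ
        positivity
      obtain ⟨hFsummable, hFbound⟩ := sum_vs_integral (s := (r:ℝ) - κ) (h := h) hs1 hh
      have hwF : ∀ k : ℕ, w r (k+1) =
          ((r:ℝ)^κ / ((Nat.factorial r : ℝ) * h ^ ((r:ℝ) - κ))) *
            F ((r:ℝ) - κ) h ((k:ℝ)+1) := by
        intro k
        have hx : (0:ℝ) < (k:ℝ)+1 := by positivity
        have hxh : (0:ℝ) < ((k:ℝ)+1)/h := by positivity
        have hcast : ((k+1:ℕ):ℝ) = (k:ℝ)+1 := by push_cast; ring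
        have e1 : (h/((k:ℝ)+1))^κ * (((k:ℝ)+1)/h) ^ r =
            ((k:ℝ)+1) ^ ((r:ℝ) - κ) / h ^ ((r:ℝ) - κ) := by
          rw [← Real.rpow_natCast (((k:ℝ)+1)/h) r,
            show h/((k:ℝ)+1) = (((k:ℝ)+1)/h)⁻¹ by rw [inv_div],
            Real.inv_rpow hxh.le, ← Real.rpow_neg hxh.le, ← Real.rpow_add hxh,
            show -κ + (r:ℝ) = (r:ℝ) - κ by ring, Real.div_rpow hx.le hh.le]
        calc w r (k+1) = (r:ℝ)^κ * (((h/((k:ℝ)+1))^κ * (((k:ℝ)+1)/h) ^ r) *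
              Real.exp (-(((k:ℝ)+1)/h)) / (Nat.factorial r)) := by
              simp only [hwdef, hqdef, hcast]
              ring
          _ = (r:ℝ)^κ * ((((k:ℝ)+1) ^ ((r:ℝ) - κ) / h ^ ((r:ℝ) - κ)) *
              Real.exp (-(((k:ℝ)+1)/h)) / (Nat.factorial r)) := by rw [e1]
          _ = ((r:ℝ)^κ / ((Nat.factorial r : ℝ) * h ^ ((r:ℝ) - κ))) *
              (((k:ℝ)+1) ^ ((r:ℝ) - κ) * Real.exp (-(((k:ℝ)+1)/h))) := by
              field_simp
          _ = ((r:ℝ)^κ / ((Nat.factorial r : ℝ) * h ^ ((r:ℝ) - κ))) *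
              F ((r:ℝ) - κ) h ((k:ℝ)+1) := rfl
      have hTval : (∑' k, w r (k+1)) =
          ((r:ℝ)^κ / ((Nat.factorial r:ℝ) * h ^ ((r:ℝ) - κ))) *
          ∑' k : ℕ, F ((r:ℝ) - κ) h ((k:ℝ)+1) := by rw [tsum_congr hwF, tsum_mul_left]
      have hmainval : h * ((r:ℝ)^κ * Real.Gamma ((r:ℝ) - κ + 1) / Real.Gamma ((r:ℝ)+1)) =
          ((r:ℝ)^κ / ((Nat.factorial r:ℝ) * h ^ ((r:ℝ) - κ))) *
          (Real.Gamma (((r:ℝ) - κ)+1) * h ^ (((r:ℝ) - κ)+1)) := by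
        rw [Real.Gamma_nat_eq_factorial,
          show h ^ (((r:ℝ) - κ)+1) = h ^ ((r:ℝ) - κ) * h from by
            rw [Real.rpow_add hh, Real.rpow_one]]
        field_simp
      rw [hTval, hmainval, ← mul_sub, Real.norm_eq_abs, abs_mul, abs_of_pos hC]
      calc ((r:ℝ)^κ / ((Nat.factorial r:ℝ) * h ^ ((r:ℝ) - κ))) *
            |(∑' k : ℕ, F ((r:ℝ) - κ) h ((k:ℝ)+1)) -
              Real.Gamma (((r:ℝ) - κ)+1) * h ^ (((r:ℝ) - κ)+1)|
          ≤ ((r:ℝ)^κ / ((Nat.factorial r:ℝ) * h ^ ((r:ℝ) - κ))) *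
            (2 * ((((r:ℝ) - κ)*h)^((r:ℝ) - κ) * Real.exp (-((r:ℝ) - κ)))) :=
            mul_le_mul_of_nonneg_left hFbound hC.le
        _ = 2 * ((r:ℝ)^κ * (((r:ℝ) - κ) ^ ((r:ℝ) - κ) * Real.exp (-((r:ℝ) - κ))) /
            (Nat.factorial r)) := by
            rw [Real.mul_rpow hspos.le hh.le]
            field_simp
    have := hdiff.add hmain
    rw [zero_add] at this
    exact this.congr fun r => by ring
  -- E tends to 0
  have hE_tendsto : Tendsto (fun r : ℕ => ∑' k, (aa (k+1) - c) * w r (k+1))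
      atTop (nhds 0) := by
    rw [Metric.tendsto_atTop]
    intro ε hε
    have hε' : 0 < ε / (2*(h+1)) := by positivity
    obtain ⟨K, hK⟩ := Metric.tendsto_atTop.mp hloc (ε / (2*(h+1))) hε'
    have hKa : ∀ n, n ≥ K → |aa n - c| < ε / (2*(h+1)) := by
      intro n hn
      have := hK n hn
      rwa [Real.dist_eq] at this
    -- finite part tends to zero
    have hwzero : ∀ j : ℕ, Tendsto (fun r : ℕ => w r j) atTop (nhds 0) := by
      intro j
      have h0 := fixed_tendsto κ ((j:ℝ)/h)
      have h1 := h0.const_mul ((h/(j:ℝ))^κ * Real.exp (-((j:ℝ)/h)))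
      rw [mul_zero] at h1
      refine h1.congr fun r => ?_
      simp only [hwdef, hqdef]
      ring
    have hF0 : Tendsto (fun r : ℕ => ∑ k ∈ Finset.range K, |aa (k+1) - c| * w r (k+1))
        atTop (nhds 0) := by
      have h1 : Tendsto (fun r : ℕ => ∑ k ∈ Finset.range K, |aa (k+1) - c| * w r (k+1))
          atTop (nhds (∑ k ∈ Finset.range K, 0)) := by
        refine tendsto_finset_sum _ (fun k _ => ?_)
        have := (hwzero (k+1)).const_mul |aa (k+1) - c|
        rwa [mul_zero] at this
      simpa using h1
    obtain ⟨N1, hN1⟩ := Metric.tendsto_atTop.mp hT_tendsto 1 one_pos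
    obtain ⟨N2, hN2⟩ := Metric.tendsto_atTop.mp hF0 (ε/2) (by positivity)
    refine ⟨max N1 N2, fun r hr => ?_⟩
    have hr1 := le_of_max_le_left hr
    have hr2 := le_of_max_le_right hr
    rw [Real.dist_0_eq_abs]
    have htail_sum : Summable (fun k : ℕ => |(aa (k+K+1) - c) * w r (k+K+1)|) :=
      (summable_nat_add_iff (f := fun k : ℕ => |(aa (k+1) - c) * w r (k+1)|) K).mpr
        (hEabs_sum r)
    have hwtail : Summable (fun k : ℕ => w r (k+K+1)) :=
      (summable_nat_add_iff (f := fun k : ℕ => w r (k+1)) K).mpr (hwsum r)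
    have habs : |∑' k, (aa (k+1) - c) * w r (k+1)| ≤
        ∑' k, |(aa (k+1) - c) * w r (k+1)| := by
      have := norm_tsum_le_tsum_norm (f := fun k : ℕ => (aa (k+1) - c) * w r (k+1))
        (by simpa only [Real.norm_eq_abs] using hEabs_sum r)
      simpa only [Real.norm_eq_abs] using this
    have hsplit : (∑' k, |(aa (k+1) - c) * w r (k+1)|) =
        (∑ k ∈ Finset.range K, |(aa (k+1) - c) * w r (k+1)|) +
        ∑' k, |(aa (k+K+1) - c) * w r (k+K+1)| :=
      (Summable.sum_add_tsum_nat_add K (hEabs_sum r)).symm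
    have htail_le : (∑' k, |(aa (k+K+1) - c) * w r (k+K+1)|) ≤
        (ε / (2*(h+1))) * (∑' k, w r (k+1)) := by
      have hle1 : ∀ k : ℕ, |(aa (k+K+1) - c) * w r (k+K+1)| ≤
          (ε / (2*(h+1))) * w r (k+K+1) := by
        intro k
        rw [abs_mul, abs_of_nonneg (hw_nonneg r _)]
        exact mul_le_mul_of_nonneg_right (le_of_lt (hKa (k+K+1) (by omega)))
          (hw_nonneg r _)
      calc (∑' k, |(aa (k+K+1) - c) * w r (k+K+1)|)
          ≤ ∑' k, (ε / (2*(h+1))) * w r (k+K+1) :=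
            Summable.tsum_le_tsum hle1 htail_sum (hwtail.mul_left _)
        _ = (ε / (2*(h+1))) * ∑' k, w r (k+K+1) := tsum_mul_left
        _ ≤ (ε / (2*(h+1))) * ∑' k, w r (k+1) := by
            refine mul_le_mul_of_nonneg_left ?_ hε'.le
            have h1 := Summable.sum_add_tsum_nat_add (f := fun k : ℕ => w r (k+1)) K (hwsum r)
            have h2 : 0 ≤ ∑ k ∈ Finset.range K, w r (k+1) :=
              Finset.sum_nonneg fun k _ => hw_nonneg r _
            linarith
    have hTbound : (∑' k, w r (k+1)) < h + 1 := by
      have h1 := hN1 r hr1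
      rw [Real.dist_eq] at h1
      have h2 := abs_lt.mp h1
      linarith [h2.2]
    have hTnonneg : 0 ≤ ∑' k, w r (k+1) := tsum_nonneg fun k => hw_nonneg r _
    have hFr := hN2 r hr2
    rw [Real.dist_0_eq_abs] at hFr
    have hFr' : (∑ k ∈ Finset.range K, |(aa (k+1) - c) * w r (k+1)|) < ε/2 := by
      refine lt_of_le_of_lt (le_abs_self _) ?_
      have heq : (∑ k ∈ Finset.range K, |(aa (k+1) - c) * w r (k+1)|) =
          ∑ k ∈ Finset.range K, |aa (k+1) - c| * w r (k+1) := by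
        refine Finset.sum_congr rfl fun k _ => ?_
        rw [abs_mul, abs_of_nonneg (hw_nonneg r _)]
      rw [heq]
      exact hFr
    have hfin : (ε / (2*(h+1))) * (∑' k, w r (k+1)) ≤ ε/2 := by
      have h1 : (ε / (2*(h+1))) * (∑' k, w r (k+1)) ≤ (ε / (2*(h+1))) * (h+1) :=
        mul_le_mul_of_nonneg_left hTbound.le hε'.le
      have h2 : (ε / (2*(h+1))) * (h+1) = ε/2 := by
        field_simp
      linarith
    calc |∑' k, (aa (k+1) - c) * w r (k+1)|
        ≤ ∑' k, |(aa (k+1) - c) * w r (k+1)| := habs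
      _ = (∑ k ∈ Finset.range K, |(aa (k+1) - c) * w r (k+1)|) +
          ∑' k, |(aa (k+K+1) - c) * w r (k+K+1)| := hsplit
      _ < ε/2 + ε/2 := by
          have := htail_le
          linarith
      _ = ε := by ring
  -- conclusion
  have hfinal : Tendsto (fun r : ℕ => c * (∑' k, w r (k+1)) +
      ∑' k, (aa (k+1) - c) * w r (k+1)) atTop (nhds (c * h)) := by
    have := (hT_tendsto.const_mul c).add hE_tendsto
    rwa [add_zero] at this
  refine hfinal.congr' ?_
  filter_upwards [eventually_ge_atTop 1] with r hr
  rw [step1 r, hdecomp r hr]
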